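/- arXiv:2106.09191 — 2 statements merged into one kernel-verified Lean document; each statement's English description precedes it below -/
import Mathlib

section
/- Let E be a real Banach space, let T > 0, N ∈ ℕ, Δt := T/N and tₙ := nΔt. Let φ : [0, T] → E be twice continuously differentiable, and for n = 1,…,N set rₙ := φ'(tₙ) − (φ(tₙ) − φ(tₙ₋₁))/Δt. Then for every 1 ≤ k ≤ N, Δt · Σ_{n=1}^{k} ‖rₙ‖² ≤ (Δt²/3) ∫_0^{t_k} ‖φ''(t)‖² dt. -/
open MeasureTheory

/-- Cauchy–Schwarz for interval integrals of nonnegative continuous functions. -/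
lemma cs_interval (a b : ℝ) (hab : a ≤ b) (f g : ℝ → ℝ)
    (hf : ContinuousOn f (Set.Icc a b)) (hg : ContinuousOn g (Set.Icc a b))
    (hf0 : ∀ t ∈ Set.Icc a b, 0 ≤ f t) (hg0 : ∀ t ∈ Set.Icc a b, 0 ≤ g t) :
    (∫ t in a..b, f t * g t) ^ 2 ≤ (∫ t in a..b, f t ^ 2) * ∫ t in a..b, g t ^ 2 := by
  set μ := volume.restrict (Set.Ioc a b) with hμ
  haveI : IsFiniteMeasure μ := ⟨by
    rw [hμ, Measure.restrict_apply_univ]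
    exact measure_Ioc_lt_top⟩
  have hsub : Set.Ioc a b ⊆ Set.Icc a b := Set.Ioc_subset_Icc_self
  have hmemf : ∀ (h : ℝ → ℝ), ContinuousOn h (Set.Icc a b) →
      MemLp h (ENNReal.ofReal 2) μ := by
    intro h hh
    obtain ⟨C, hC⟩ := isCompact_Icc.exists_bound_of_continuousOn hh
    refine MemLp.of_bound ((hh.mono hsub).aestronglyMeasurable measurableSet_Ioc) C ?_
    rw [hμ, ae_restrict_iff' measurableSet_Ioc]
    exact Filter.Eventually.of_forall fun x hx => hC x (hsub hx)
  have hconj : (2 : ℝ).HolderConjugate 2 := ⟨by norm_num, by norm_num, by norm_num⟩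
  have hae : ∀ (h : ℝ → ℝ), (∀ t ∈ Set.Icc a b, 0 ≤ h t) → 0 ≤ᶠ[ae μ] h := by
    intro h h0
    rw [hμ, Filter.EventuallyLE, ae_restrict_iff' measurableSet_Ioc]
    exact Filter.Eventually.of_forall fun x hx => h0 x (hsub hx)
  have key := integral_mul_le_Lp_mul_Lq_of_nonneg hconj (hae f hf0) (hae g hg0)
    (hmemf f hf) (hmemf g hg)
  have hr2 : ∀ x : ℝ, x ^ (2 : ℝ) = x ^ (2 : ℕ) := by
    intro x; rw [show (2:ℝ) = ((2:ℕ) : ℝ) by norm_num, Real.rpow_natCast]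
  simp only [hr2] at key
  have hIf : (0:ℝ) ≤ ∫ a_1, f a_1 ^ 2 ∂μ := integral_nonneg fun x => sq_nonneg _
  have hIg : (0:ℝ) ≤ ∫ a_1, g a_1 ^ 2 ∂μ := integral_nonneg fun x => sq_nonneg _
  have hfg : (0:ℝ) ≤ ∫ a_1, f a_1 * g a_1 ∂μ := by
    refine integral_nonneg_of_ae ?_
    filter_upwards [hae f hf0, hae g hg0] with x h1 h2
    exact mul_nonneg h1 h2
  rw [intervalIntegral.integral_of_le hab, intervalIntegral.integral_of_le hab,
    intervalIntegral.integral_of_le hab]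
  calc (∫ t in Set.Ioc a b, f t * g t) ^ 2
      ≤ ((∫ a_1, f a_1 ^ 2 ∂μ) ^ ((1:ℝ)/2) * (∫ a_1, g a_1 ^ 2 ∂μ) ^ ((1:ℝ)/2)) ^ 2 := by
        exact pow_le_pow_left₀ hfg key 2
    _ = (∫ t in Set.Ioc a b, f t ^ 2) * ∫ t in Set.Ioc a b, g t ^ 2 := by
        rw [mul_pow, ← Real.rpow_natCast (_ ^ ((1:ℝ)/2)) 2, ← Real.rpow_natCast (_ ^ ((1:ℝ)/2)) 2,
          ← Real.rpow_mul hIf, ← Real.rpow_mul hIg]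
        norm_num
        rfl

/-- Taylor remainder bound on one interval. -/
lemma key_interval {E : Type*} [NormedAddCommGroup E] [NormedSpace ℝ E] [CompleteSpace E]
    (T : ℝ) (φ φ' φ'' : ℝ → E)
    (hd1 : ∀ t ∈ Set.Icc (0 : ℝ) T, HasDerivWithinAt φ (φ' t) (Set.Icc (0 : ℝ) T) t)
    (hd2 : ∀ t ∈ Set.Icc (0 : ℝ) T, HasDerivWithinAt φ' (φ'' t) (Set.Icc (0 : ℝ) T) t)
    (hcont : ContinuousOn φ'' (Set.Icc (0 : ℝ) T))
    (a b : ℝ) (ha : 0 ≤ a) (hb : b ≤ T) (hab : a ≤ b) :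
    ‖(b - a) • φ' b - (φ b - φ a)‖ ^ 2 ≤ ((b - a) ^ 3 / 3) * ∫ t in a..b, ‖φ'' t‖ ^ 2 := by
  have habT : Set.Icc a b ⊆ Set.Icc (0 : ℝ) T := Set.Icc_subset_Icc ha hb
  have hbmem : b ∈ Set.Icc (0:ℝ) T := ⟨le_trans ha hab, hb⟩
  have hamem : a ∈ Set.Icc (0:ℝ) T := ⟨ha, le_trans hab hb⟩
  -- FTC for ψ t = φ t + (a - t) • φ' t
  have hcφ' : ContinuousOn φ' (Set.Icc (0:ℝ) T) :=
    fun t ht => (hd2 t ht).continuousWithinAt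
  have hcφ : ContinuousOn φ (Set.Icc (0:ℝ) T) :=
    fun t ht => (hd1 t ht).continuousWithinAt
  have hint : IntervalIntegrable (fun t => (a - t) • φ'' t) volume a b := by
    apply ContinuousOn.intervalIntegrable
    rw [Set.uIcc_of_le hab]
    exact ((continuousOn_const.sub continuousOn_id).smul (hcont.mono habT))
  have hftc : ∫ t in a..b, (a - t) • φ'' t
      = (φ b + (a - b) • φ' b) - (φ a + (a - a) • φ' a) := by
    apply intervalIntegral.integral_eq_sub_of_hasDeriv_right_of_le hab
    · exact ((hcφ.mono habT).add ((continuousOn_const.sub continuousOn_id).smul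
        (hcφ'.mono habT)))
    · intro x hx
      have hxT : Set.Icc (0:ℝ) T ∈ nhds x := by
        apply mem_nhds_iff.2
        exact ⟨Set.Ioo 0 T, Set.Ioo_subset_Icc_self, isOpen_Ioo,
          ⟨lt_of_le_of_lt ha hx.1, lt_of_lt_of_le hx.2 hb⟩⟩
      have hxmem : x ∈ Set.Icc (0:ℝ) T := mem_of_mem_nhds hxT
      have h1 : HasDerivAt φ (φ' x) x := (hd1 x hxmem).hasDerivAt hxT
      have h2 : HasDerivAt φ' (φ'' x) x := (hd2 x hxmem).hasDerivAt hxT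
      have h3 : HasDerivAt (fun t : ℝ => a - t) (-1) x := by
        simpa using (hasDerivAt_id x).const_sub a
      have h4 := h3.smul h2
      have h5 := h1.add h4
      have : φ' x + ((a - x) • φ'' x + (-1 : ℝ) • φ' x) = (a - x) • φ'' x := by
        simp [neg_one_smul]
      rw [this] at h5
      exact h5.hasDerivWithinAt
    · exact hint
  have hrep : (b - a) • φ' b - (φ b - φ a) = ∫ t in a..b, (t - a) • φ'' t := by
    have : ∫ t in a..b, (t - a) • φ'' t = - ∫ t in a..b, (a - t) • φ'' t := by
      rw [← intervalIntegral.integral_neg]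
      congr 1; ext t; rw [← neg_smul]; ring_nf
    rw [this, hftc]
    simp [sub_smul]
    abel
  rw [hrep]
  have hnormle : ‖∫ t in a..b, (t - a) • φ'' t‖ ≤ ∫ t in a..b, (t - a) * ‖φ'' t‖ := by
    refine le_trans (intervalIntegral.norm_integral_le_integral_norm hab) (le_of_eq ?_)
    apply intervalIntegral.integral_congr
    intro t ht
    rw [Set.uIcc_of_le hab] at ht
    show ‖(t - a) • φ'' t‖ = (t - a) * ‖φ'' t‖
    rw [norm_smul, Real.norm_of_nonneg (by linarith [ht.1])]
  have hsq : ∫ t in a..b, (t - a) ^ 2 = (b - a) ^ 3 / 3 := by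
    rw [show (fun t : ℝ => (t - a) ^ 2) = fun t : ℝ => (fun s : ℝ => s ^ 2) (t - a) from rfl,
      intervalIntegral.integral_comp_sub_right (fun s : ℝ => s ^ 2) a]
    simp [integral_pow]
    ring
  have hCS := cs_interval a b hab (fun t => t - a) (fun t => ‖φ'' t‖)
    (continuousOn_id.sub continuousOn_const) ((hcont.mono habT).norm)
    (fun t ht => by linarith [ht.1]) (fun t ht => norm_nonneg _)
  rw [hsq] at hCS
  calc ‖∫ t in a..b, (t - a) • φ'' t‖ ^ 2
      ≤ (∫ t in a..b, (t - a) * ‖φ'' t‖) ^ 2 := pow_le_pow_left₀ (norm_nonneg _) hnormle 2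
    _ ≤ ((b - a) ^ 3 / 3) * ∫ t in a..b, ‖φ'' t‖ ^ 2 := hCS

/-- Discrete ℓ²-in-time O(Δt) consistency bound for backward Euler:
with `tₙ = nΔt`, `Δt = T/N`, and `rₙ = φ'(tₙ) − (φ(tₙ) − φ(tₙ₋₁))/Δt`,
`Δt Σ_{n=1}^k ‖rₙ‖² ≤ (Δt²/3) ∫_0^{t_k} ‖φ''(t)‖² dt` for all `1 ≤ k ≤ N`. -/
theorem backward_euler_consistency_l2_bound
    {E : Type*} [NormedAddCommGroup E] [NormedSpace ℝ E] [CompleteSpace E]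
    (T : ℝ) (hT : 0 < T) (N : ℕ) (hN : 0 < N) (Δt : ℝ) (hΔt : Δt = T / N)
    (φ φ' φ'' : ℝ → E)
    (hd1 : ∀ t ∈ Set.Icc (0 : ℝ) T, HasDerivWithinAt φ (φ' t) (Set.Icc (0 : ℝ) T) t)
    (hd2 : ∀ t ∈ Set.Icc (0 : ℝ) T, HasDerivWithinAt φ' (φ'' t) (Set.Icc (0 : ℝ) T) t)
    (hcont : ContinuousOn φ'' (Set.Icc (0 : ℝ) T))
    (k : ℕ) (hk1 : 1 ≤ k) (hkN : k ≤ N) :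
    Δt * ∑ n ∈ Finset.Icc 1 k,
        ‖φ' ((n : ℝ) * Δt) -
            Δt⁻¹ • (φ ((n : ℝ) * Δt) - φ (((n : ℝ) - 1) * Δt))‖ ^ 2 ≤
      (Δt ^ 2 / 3) * ∫ t in (0 : ℝ)..((k : ℝ) * Δt), ‖φ'' t‖ ^ 2 := by
  have hΔpos : 0 < Δt := by
    rw [hΔt]; positivity
  have hmem : ∀ n : ℕ, n ≤ N → (n : ℝ) * Δt ∈ Set.Icc (0:ℝ) T := by
    intro n hn
    constructor
    · positivity
    · rw [hΔt]
      have hnN : (n:ℝ) ≤ (N:ℝ) := by exact_mod_cast hn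
      calc (n:ℝ) * (T / N) ≤ (N:ℝ) * (T / N) :=
            mul_le_mul_of_nonneg_right hnN (by positivity)
        _ = T := by field_simp
  -- per-interval bound
  have hterm : ∀ n ∈ Finset.Icc 1 k,
      Δt * ‖φ' ((n : ℝ) * Δt) - Δt⁻¹ • (φ ((n : ℝ) * Δt) - φ (((n : ℝ) - 1) * Δt))‖ ^ 2
        ≤ (Δt ^ 2 / 3) * ∫ t in (((n:ℝ)-1) * Δt)..((n:ℝ) * Δt), ‖φ'' t‖ ^ 2 := by
    intro n hn
    rw [Finset.mem_Icc] at hn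
    set a := ((n:ℝ) - 1) * Δt with hadef
    set b := (n:ℝ) * Δt with hbdef
    have hn1 : (1:ℝ) ≤ (n:ℝ) := by exact_mod_cast hn.1
    have ha0 : 0 ≤ a := by rw [hadef]; nlinarith
    have hbT : b ≤ T := (hmem n (le_trans hn.2 hkN)).2
    have hablt : a ≤ b := by rw [hadef, hbdef]; nlinarith
    have hba : b - a = Δt := by rw [hadef, hbdef]; ring
    have hk := key_interval T φ φ' φ'' hd1 hd2 hcont a b ha0 hbT hablt
    rw [hba] at hk
    have heq : φ' b - Δt⁻¹ • (φ b - φ a) = Δt⁻¹ • (Δt • φ' b - (φ b - φ a)) := by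
      rw [smul_sub Δt⁻¹ (Δt • φ' b), smul_smul, inv_mul_cancel₀ (ne_of_gt hΔpos), one_smul]
    rw [heq, norm_smul, mul_pow, Real.norm_of_nonneg (le_of_lt (by positivity))]
    calc Δt * (Δt⁻¹ ^ 2 * ‖Δt • φ' b - (φ b - φ a)‖ ^ 2)
        ≤ Δt * (Δt⁻¹ ^ 2 * ((Δt ^ 3 / 3) * ∫ t in a..b, ‖φ'' t‖ ^ 2)) := by
          apply mul_le_mul_of_nonneg_left _ (le_of_lt hΔpos)
          exact mul_le_mul_of_nonneg_left hk (by positivity)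
      _ = (Δt ^ 2 / 3) * ∫ t in a..b, ‖φ'' t‖ ^ 2 := by
          field_simp
  -- sum up
  rw [Finset.mul_sum]
  apply le_trans (Finset.sum_le_sum hterm)
  have hintc : ∀ i : ℕ, i < k →
      IntervalIntegrable (fun t => ‖φ'' t‖ ^ 2) volume ((i:ℝ) * Δt) (((i:ℝ)+1) * Δt) := by
    intro i hi
    apply ContinuousOn.intervalIntegrable
    have h1 : (0:ℝ) ≤ (i:ℝ) * Δt := by positivity
    have h2 : ((i:ℝ)+1) * Δt ≤ T := by
      have := (hmem (i+1) (by omega)).2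
      push_cast at this ⊢
      linarith
    have hle : (i:ℝ) * Δt ≤ ((i:ℝ)+1) * Δt := by nlinarith [hΔpos.le]
    rw [Set.uIcc_of_le hle]
    exact ((hcont.mono (Set.Icc_subset_Icc h1 h2)).norm).pow 2
  have hsum : ∑ i ∈ Finset.range k, ∫ t in ((i:ℝ) * Δt)..(((i:ℝ)+1) * Δt), ‖φ'' t‖ ^ 2
      = ∫ t in (0:ℝ)..((k:ℝ) * Δt), ‖φ'' t‖ ^ 2 := by
    have := intervalIntegral.sum_integral_adjacent_intervals
      (a := fun i : ℕ => (i:ℝ) * Δt) (n := k) (f := fun t => ‖φ'' t‖ ^ 2)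
      (fun i hi => by push_cast; exact hintc i hi)
    simpa using this
  refine le_of_eq ?_
  calc ∑ n ∈ Finset.Icc 1 k, (Δt ^ 2 / 3) * ∫ t in (((n:ℝ)-1) * Δt)..((n:ℝ) * Δt), ‖φ'' t‖ ^ 2
      = (Δt ^ 2 / 3) * ∑ i ∈ Finset.range k,
          ∫ t in ((i:ℝ) * Δt)..(((i:ℝ)+1) * Δt), ‖φ'' t‖ ^ 2 := by
        rw [← Finset.mul_sum]
        congr 1
        rw [show Finset.Icc 1 k = Finset.Ico 1 (k+1) by rw [Finset.Ico_add_one_right_eq_Icc],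
          Finset.sum_Ico_eq_sum_range]
        simp only [Nat.add_sub_cancel]
        apply Finset.sum_congr rfl
        intro i _
        push_cast
        rw [show (1:ℝ) + (i:ℝ) - 1 = (i:ℝ) by ring, show (1:ℝ) + (i:ℝ) = (i:ℝ) + 1 by ring]
    _ = (Δt ^ 2 / 3) * ∫ t in (0:ℝ)..((k:ℝ) * Δt), ‖φ'' t‖ ^ 2 := by rw [hsum]
end

section
/- There exists a constant C > 0 such that for every real Banach space E, every T > 0, every N ∈ ℕ with N ≥ 2 and Δt := T/N, tₙ := nΔt, and every three times continuously differentiable function φ : [0, T] → E, the backward Euler consistency errors rₙ := φ'(tₙ) − (φ(tₙ) − φ(tₙ₋₁))/Δt satisfy, for every 2 ≤ k ≤ N, Δt · Σ_{n=2}^{k} ‖(rₙ − rₙ₋₁)/Δt‖² ≤ C Δt² ∫_0^{t_k} ‖φ'''(t)‖² dt. -/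
open MeasureTheory Set

set_option linter.unnecessarySeqFocus false

/-- Cauchy–Schwarz for interval integrals of real functions. -/
private lemma cs_interval_s9 {f : ℝ → ℝ} {a b : ℝ} (hab : a ≤ b)
    (hf : IntervalIntegrable f volume a b)
    (hf2 : IntervalIntegrable (fun t => f t ^ 2) volume a b) :
    (∫ t in a..b, f t) ^ 2 ≤ (b - a) * ∫ t in a..b, f t ^ 2 := by
  rcases eq_or_lt_of_le hab with h | h
  · simp [← h]
  set I := ∫ t in a..b, f t with hI
  set lam := I / (b - a) with hlam
  have key : 0 ≤ ∫ t in a..b, (f t - lam) ^ 2 :=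
    intervalIntegral.integral_nonneg hab (fun u _ => sq_nonneg _)
  have expand : ∫ t in a..b, (f t - lam) ^ 2
      = (∫ t in a..b, f t ^ 2) - 2 * lam * I + lam ^ 2 * (b - a) := by
    have h1 : ∀ t : ℝ, (f t - lam) ^ 2 = f t ^ 2 - 2 * lam * f t + lam ^ 2 := by
      intro t; ring
    simp_rw [h1]
    rw [intervalIntegral.integral_add (hf2.sub ((hf.const_mul (2 * lam))))
        intervalIntegrable_const,
      intervalIntegral.integral_sub hf2 (hf.const_mul (2 * lam)),
      intervalIntegral.integral_const_mul, intervalIntegral.integral_const]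
    rw [← hI, smul_eq_mul]; field_simp
  rw [expand] at key
  have hba : 0 < b - a := by linarith
  have hlam2 : lam * (b - a) = I := by rw [hlam, div_mul_cancel₀ _ hba.ne']
  nlinarith [key, sq_nonneg (I - lam * (b - a))]

private lemma ftc_kernel {E : Type} [NormedAddCommGroup E] [NormedSpace ℝ E] [CompleteSpace E]
    {T : ℝ} {φ φ' φ'' φ''' : ℝ → E}
    (hd1 : ∀ t ∈ Icc (0:ℝ) T, HasDerivWithinAt φ (φ' t) (Icc (0:ℝ) T) t)
    (hd2 : ∀ t ∈ Icc (0:ℝ) T, HasDerivWithinAt φ' (φ'' t) (Icc (0:ℝ) T) t)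
    (hd3 : ∀ t ∈ Icc (0:ℝ) T, HasDerivWithinAt φ'' (φ''' t) (Icc (0:ℝ) T) t)
    (hc : ContinuousOn φ''' (Icc (0:ℝ) T))
    {a b : ℝ} (h0a : 0 ≤ a) (hab : a ≤ b) (hbT : b ≤ T)
    {K K1 K2 : ℝ → ℝ}
    (hK : ∀ s, HasDerivAt K (K1 s) s) (hK1 : ∀ s, HasDerivAt K1 (K2 s) s)
    (hK2 : ∀ s, HasDerivAt K2 0 s) :
    ∫ s in a..b, K s • φ''' s
      = (K b • φ'' b - K1 b • φ' b + K2 b • φ b)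
        - (K a • φ'' a - K1 a • φ' a + K2 a • φ a) := by
  have hsub : Icc a b ⊆ Icc (0:ℝ) T := Icc_subset_Icc h0a hbT
  have hKc : Continuous K := continuous_iff_continuousAt.2 fun s => (hK s).continuousAt
  have hK1c : Continuous K1 := continuous_iff_continuousAt.2 fun s => (hK1 s).continuousAt
  have hK2c : Continuous K2 := continuous_iff_continuousAt.2 fun s => (hK2 s).continuousAt
  have cφT : ContinuousOn φ (Icc (0:ℝ) T) := fun t ht => (hd1 t ht).continuousWithinAt
  have cφ'T : ContinuousOn φ' (Icc (0:ℝ) T) := fun t ht => (hd2 t ht).continuousWithinAt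
  have cφ''T : ContinuousOn φ'' (Icc (0:ℝ) T) := fun t ht => (hd3 t ht).continuousWithinAt
  have Hcont : ContinuousOn (fun s => K s • φ'' s - K1 s • φ' s + K2 s • φ s) (Icc a b) :=
    ((hKc.continuousOn.smul (cφ''T.mono hsub)).sub
      (hK1c.continuousOn.smul (cφ'T.mono hsub))).add
      (hK2c.continuousOn.smul (cφT.mono hsub))
  have Hint : IntervalIntegrable (fun s => K s • φ''' s) volume a b := by
    apply ContinuousOn.intervalIntegrable
    rw [Set.uIcc_of_le hab]
    exact hKc.continuousOn.smul (hc.mono hsub)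
  have Hderiv : ∀ x ∈ Ioo a b,
      HasDerivWithinAt (fun s => K s • φ'' s - K1 s • φ' s + K2 s • φ s)
        (K x • φ''' x) (Ioi x) x := by
    intro x hx
    have hx0T : x ∈ Ioo (0:ℝ) T := ⟨lt_of_le_of_lt h0a hx.1, lt_of_lt_of_le hx.2 hbT⟩
    have hmem : Icc (0:ℝ) T ∈ nhds x := Icc_mem_nhds hx0T.1 hx0T.2
    have hxI : x ∈ Icc (0:ℝ) T := Ioo_subset_Icc_self hx0T
    have h0 : HasDerivAt φ (φ' x) x := (hd1 x hxI).hasDerivAt hmem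
    have h1 : HasDerivAt φ' (φ'' x) x := (hd2 x hxI).hasDerivAt hmem
    have h2 : HasDerivAt φ'' (φ''' x) x := (hd3 x hxI).hasDerivAt hmem
    have hH : HasDerivAt (fun s => K s • φ'' s - K1 s • φ' s + K2 s • φ s)
        ((K x • φ''' x + K1 x • φ'' x) - (K1 x • φ'' x + K2 x • φ' x)
          + (K2 x • φ' x + (0:ℝ) • φ x)) x :=
      (((hK x).smul h2).sub ((hK1 x).smul h1)).add ((hK2 x).smul h0)
    have heq : (K x • φ''' x + K1 x • φ'' x) - (K1 x • φ'' x + K2 x • φ' x)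
          + (K2 x • φ' x + (0:ℝ) • φ x) = K x • φ''' x := by
      rw [zero_smul]; abel
    rw [heq] at hH
    exact hH.hasDerivWithinAt
  exact intervalIntegral.integral_eq_sub_of_hasDeriv_right_of_le hab Hcont Hderiv Hint

private lemma per_step {E : Type} [NormedAddCommGroup E] [NormedSpace ℝ E] [CompleteSpace E]
    {T Δt : ℝ} (hΔt : 0 < Δt) {φ φ' φ'' φ''' : ℝ → E}
    (hd1 : ∀ t ∈ Icc (0:ℝ) T, HasDerivWithinAt φ (φ' t) (Icc (0:ℝ) T) t)
    (hd2 : ∀ t ∈ Icc (0:ℝ) T, HasDerivWithinAt φ' (φ'' t) (Icc (0:ℝ) T) t)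
    (hd3 : ∀ t ∈ Icc (0:ℝ) T, HasDerivWithinAt φ'' (φ''' t) (Icc (0:ℝ) T) t)
    (hc : ContinuousOn φ''' (Icc (0:ℝ) T))
    {a m b : ℝ} (h0a : 0 ≤ a) (hm : m = a + Δt) (hb : b = a + 2 * Δt) (hbT : b ≤ T) :
    ‖Δt⁻¹ • ((φ' b - Δt⁻¹ • (φ b - φ m)) - (φ' m - Δt⁻¹ • (φ m - φ a)))‖ ^ 2
      ≤ Δt / 2 * ∫ t in a..b, ‖φ''' t‖ ^ 2 := by
  have ham : a ≤ m := by rw [hm]; linarith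
  have hmb : m ≤ b := by rw [hm, hb]; linarith
  have hab : a ≤ b := le_trans ham hmb
  have h0m : (0:ℝ) ≤ m := le_trans h0a ham
  have hmT : m ≤ T := le_trans hmb hbT
  -- kernels
  have hbs : ∀ s : ℝ, HasDerivAt (fun y => b - y) (-1 : ℝ) s := fun s => by
    simpa using (hasDerivAt_id s).const_sub b
  have hsa : ∀ s : ℝ, HasDerivAt (fun y => y - a) (1 : ℝ) s := fun s =>
    (hasDerivAt_id s).sub_const a
  have hKa : ∀ s : ℝ, HasDerivAt (fun y => (y - a) ^ 2 / 2) (s - a) s := by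
    intro s
    have := ((hsa s).pow 2).div_const 2
    exact this.congr_deriv (by norm_num)
  have hKb : ∀ s : ℝ, HasDerivAt (fun y => Δt * (b - y) - (b - y) ^ 2 / 2)
      ((b - s) - Δt) s := by
    intro s
    have := (((hbs s).const_mul Δt).sub (((hbs s).pow 2).div_const 2))
    exact this.congr_deriv (by norm_num; ring)
  have hK1a : ∀ s : ℝ, HasDerivAt (fun y => y - a) ((fun _ => (1:ℝ)) s) s := hsa
  have hK1b : ∀ s : ℝ, HasDerivAt (fun y => (b - y) - Δt) ((fun _ => (-1:ℝ)) s) s :=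
    fun s => (hbs s).sub_const Δt
  have hK2a : ∀ s : ℝ, HasDerivAt (fun _ => (1:ℝ)) 0 s := fun s => hasDerivAt_const s 1
  have hK2b : ∀ s : ℝ, HasDerivAt (fun _ => (-1:ℝ)) 0 s := fun s => hasDerivAt_const s (-1)
  have E1 := ftc_kernel hd1 hd2 hd3 hc h0a ham hmT hKa hK1a hK2a
  have E2 := ftc_kernel hd1 hd2 hd3 hc h0m hmb hbT hKb hK1b hK2b
  -- the L identity
  set L := Δt • φ' b - Δt • φ' m - φ b + (2:ℝ) • φ m - φ a with hL
  have hLsum : L = (∫ s in a..m, ((s - a) ^ 2 / 2) • φ''' s)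
      + ∫ s in m..b, (Δt * (b - s) - (b - s) ^ 2 / 2) • φ''' s := by
    rw [E1, E2, hL]
    subst hm hb
    match_scalars <;> ring
  -- norm bounds on each piece
  have cnorm : ContinuousOn (fun t => ‖φ''' t‖) (Icc (0:ℝ) T) := hc.norm
  have intnorm : ∀ {c d : ℝ}, 0 ≤ c → c ≤ d → d ≤ T →
      IntervalIntegrable (fun t => ‖φ''' t‖) volume c d := by
    intro c d h1 h2 h3
    apply ContinuousOn.intervalIntegrable
    rw [Set.uIcc_of_le h2]
    exact cnorm.mono (Icc_subset_Icc h1 h3)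
  have bound_piece : ∀ (K : ℝ → ℝ) (c d : ℝ), 0 ≤ c → c ≤ d → d ≤ T →
      Continuous K → (∀ s ∈ Icc c d, |K s| ≤ Δt ^ 2 / 2) →
      ‖∫ s in c..d, K s • φ''' s‖ ≤ Δt ^ 2 / 2 * ∫ s in c..d, ‖φ''' s‖ := by
    intro K c d h1 h2 h3 hKc hKle
    calc ‖∫ s in c..d, K s • φ''' s‖ ≤ ∫ s in c..d, ‖K s • φ''' s‖ :=
          intervalIntegral.norm_integral_le_integral_norm h2
      _ ≤ ∫ s in c..d, Δt ^ 2 / 2 * ‖φ''' s‖ := by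
          apply intervalIntegral.integral_mono_on h2
          · apply ContinuousOn.intervalIntegrable
            rw [Set.uIcc_of_le h2]
            exact (hKc.continuousOn.smul ((hc.mono (Icc_subset_Icc h1 h3)))).norm
          · exact (intnorm h1 h2 h3).const_mul _
          · intro s hs
            rw [norm_smul, Real.norm_eq_abs]
            exact mul_le_mul_of_nonneg_right (hKle s hs) (norm_nonneg _)
      _ = Δt ^ 2 / 2 * ∫ s in c..d, ‖φ''' s‖ := intervalIntegral.integral_const_mul _ _
  have hKabnd : ∀ s ∈ Icc a m, |(s - a) ^ 2 / 2| ≤ Δt ^ 2 / 2 := by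
    intro s hs
    rw [abs_of_nonneg (by positivity)]
    have h1 : s - a ≤ Δt := by rw [hm] at hs; linarith [hs.2]
    have h2 : 0 ≤ s - a := by linarith [hs.1]
    nlinarith
  have hKbbnd : ∀ s ∈ Icc m b, |Δt * (b - s) - (b - s) ^ 2 / 2| ≤ Δt ^ 2 / 2 := by
    intro s hs
    have h1 : b - s ≤ Δt := by rw [hm, hb] at hs; linarith [hs.1]
    have h2 : 0 ≤ b - s := by linarith [hs.2]
    rw [abs_le]
    constructor <;> nlinarith
  have N1 := bound_piece _ a m h0a ham hmT
    (((continuous_id.sub continuous_const).pow 2).div_const 2) hKabnd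
  have N2 := bound_piece _ m b h0m hmb hbT
    ((continuous_const.mul (continuous_const.sub continuous_id)).sub
      (((continuous_const.sub continuous_id).pow 2).div_const 2)) hKbbnd
  have hIsplit : (∫ s in a..m, ‖φ''' s‖) + ∫ s in m..b, ‖φ''' s‖ = ∫ s in a..b, ‖φ''' s‖ :=
    intervalIntegral.integral_add_adjacent_intervals (intnorm h0a ham hmT) (intnorm h0m hmb hbT)
  have hLle : ‖L‖ ≤ Δt ^ 2 / 2 * ∫ s in a..b, ‖φ''' s‖ := by
    rw [hLsum, ← hIsplit, mul_add]
    exact le_trans (norm_add_le _ _) (add_le_add N1 N2)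
  -- Cauchy–Schwarz
  have hint2 : IntervalIntegrable (fun t => ‖φ''' t‖ ^ 2) volume a b := by
    apply ContinuousOn.intervalIntegrable
    rw [Set.uIcc_of_le hab]
    exact (cnorm.mono (Icc_subset_Icc h0a hbT)).pow 2
  have hCS : (∫ s in a..b, ‖φ''' s‖) ^ 2 ≤ 2 * Δt * ∫ s in a..b, ‖φ''' s‖ ^ 2 := by
    have := cs_interval_s9 hab (intnorm h0a hab hbT) hint2
    have hba : b - a = 2 * Δt := by rw [hb]; ring
    rwa [hba] at this
  -- rewrite the vector as Δt⁻² • L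
  have hv : Δt⁻¹ • ((φ' b - Δt⁻¹ • (φ b - φ m)) - (φ' m - Δt⁻¹ • (φ m - φ a)))
      = (Δt⁻¹ * Δt⁻¹) • L := by
    rw [hL]
    have hne : Δt ≠ 0 := ne_of_gt hΔt
    match_scalars <;> field_simp <;> norm_num
  rw [hv, norm_smul, Real.norm_eq_abs, abs_of_pos (by positivity), mul_pow]
  have hInn : 0 ≤ ∫ s in a..b, ‖φ''' s‖ :=
    intervalIntegral.integral_nonneg hab (fun u _ => norm_nonneg _)
  have hJnn : 0 ≤ ∫ s in a..b, ‖φ''' s‖ ^ 2 :=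
    intervalIntegral.integral_nonneg hab (fun u _ => sq_nonneg _)
  have hLnn : 0 ≤ ‖L‖ := norm_nonneg _
  have key : ‖L‖ ^ 2 ≤ (Δt ^ 2 / 2) ^ 2 * (2 * Δt * ∫ s in a..b, ‖φ''' s‖ ^ 2) := by
    calc ‖L‖ ^ 2 ≤ (Δt ^ 2 / 2 * ∫ s in a..b, ‖φ''' s‖) ^ 2 := by nlinarith
      _ = (Δt ^ 2 / 2) ^ 2 * (∫ s in a..b, ‖φ''' s‖) ^ 2 := by ring
      _ ≤ (Δt ^ 2 / 2) ^ 2 * (2 * Δt * ∫ s in a..b, ‖φ''' s‖ ^ 2) := by nlinarith [sq_nonneg (Δt^2/2)]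
  have hfin : (Δt⁻¹ * Δt⁻¹) ^ 2 * ((Δt ^ 2 / 2) ^ 2 * (2 * Δt * ∫ s in a..b, ‖φ''' s‖ ^ 2))
      = Δt / 2 * ∫ s in a..b, ‖φ''' s‖ ^ 2 := by
    have hne : Δt ≠ 0 := ne_of_gt hΔt
    have hsc : (Δt⁻¹ * Δt⁻¹) ^ 2 * ((Δt ^ 2 / 2) ^ 2 * (2 * Δt)) = Δt / 2 := by
      field_simp
    calc (Δt⁻¹ * Δt⁻¹) ^ 2 * ((Δt ^ 2 / 2) ^ 2 * (2 * Δt * ∫ s in a..b, ‖φ''' s‖ ^ 2))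
        = ((Δt⁻¹ * Δt⁻¹) ^ 2 * ((Δt ^ 2 / 2) ^ 2 * (2 * Δt))) * ∫ s in a..b, ‖φ''' s‖ ^ 2 := by
          ring
      _ = Δt / 2 * ∫ s in a..b, ‖φ''' s‖ ^ 2 := by rw [hsc]
  calc (Δt⁻¹ * Δt⁻¹) ^ 2 * ‖L‖ ^ 2
      ≤ (Δt⁻¹ * Δt⁻¹) ^ 2 * ((Δt ^ 2 / 2) ^ 2 * (2 * Δt * ∫ s in a..b, ‖φ''' s‖ ^ 2)) := by
        apply mul_le_mul_of_nonneg_left key (by positivity)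
    _ = Δt / 2 * ∫ s in a..b, ‖φ''' s‖ ^ 2 := hfin


/-- There is a universal constant `C > 0` such that for every real Banach space `E`,
every `T > 0`, `N ≥ 2`, `Δt = T/N`, `tₙ = nΔt`, and every three times continuously
differentiable `φ : [0,T] → E`, the backward divided differences of the backward
Euler consistency errors `rₙ = φ'(tₙ) − (φ(tₙ) − φ(tₙ₋₁))/Δt` satisfy
`Δt Σ_{n=2}^k ‖(rₙ − rₙ₋₁)/Δt‖² ≤ C Δt² ∫_0^{t_k} ‖φ'''(t)‖² dt` for all `2 ≤ k ≤ N`. -/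
theorem backward_euler_consistency_difference_l2_bound :
    ∃ C : ℝ, 0 < C ∧
      ∀ (E : Type) [NormedAddCommGroup E] [NormedSpace ℝ E] [CompleteSpace E]
        (T : ℝ), 0 < T → ∀ (N : ℕ), 2 ≤ N → ∀ (Δt : ℝ), Δt = T / N →
        ∀ (φ φ' φ'' φ''' : ℝ → E),
          (∀ t ∈ Set.Icc (0 : ℝ) T, HasDerivWithinAt φ (φ' t) (Set.Icc (0 : ℝ) T) t) →
          (∀ t ∈ Set.Icc (0 : ℝ) T, HasDerivWithinAt φ' (φ'' t) (Set.Icc (0 : ℝ) T) t) →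
          (∀ t ∈ Set.Icc (0 : ℝ) T, HasDerivWithinAt φ'' (φ''' t) (Set.Icc (0 : ℝ) T) t) →
          ContinuousOn φ''' (Set.Icc (0 : ℝ) T) →
          ∀ k : ℕ, 2 ≤ k → k ≤ N →
            Δt * ∑ n ∈ Finset.Icc 2 k,
                ‖Δt⁻¹ •
                    ((φ' ((n : ℝ) * Δt) -
                        Δt⁻¹ • (φ ((n : ℝ) * Δt) - φ (((n : ℝ) - 1) * Δt))) -
                      (φ' (((n : ℝ) - 1) * Δt) -
                        Δt⁻¹ • (φ (((n : ℝ) - 1) * Δt) - φ (((n : ℝ) - 2) * Δt))))‖ ^ 2 ≤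
              C * Δt ^ 2 * ∫ t in (0 : ℝ)..((k : ℝ) * Δt), ‖φ''' t‖ ^ 2 := by
  refine ⟨2, by norm_num, ?_⟩
  intro E _ _ _ T hT N hN Δt hΔtdef φ φ' φ'' φ''' hd1 hd2 hd3 hc k hk2 hkN
  have hNR : (0:ℝ) < (N:ℝ) := by exact_mod_cast Nat.lt_of_lt_of_le (by norm_num) hN
  have hΔt : 0 < Δt := by rw [hΔtdef]; positivity
  have hNΔt : (N:ℝ) * Δt = T := by rw [hΔtdef]; field_simp
  set B : ℕ → ℝ := fun i => ∫ t in ((i:ℝ) * Δt)..(((i:ℝ) + 1) * Δt), ‖φ''' t‖ ^ 2 with hB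
  have hBnn : ∀ i, 0 ≤ B i := fun i =>
    intervalIntegral.integral_nonneg (by nlinarith [hΔt, (Nat.cast_nonneg i : (0:ℝ) ≤ i)])
      (fun u _ => sq_nonneg _)
  have intsq : ∀ {c d : ℝ}, 0 ≤ c → c ≤ d → d ≤ T →
      IntervalIntegrable (fun t => ‖φ''' t‖ ^ 2) volume c d := by
    intro c d h1 h2 h3
    apply ContinuousOn.intervalIntegrable
    rw [Set.uIcc_of_le h2]
    exact (hc.norm.mono (Set.Icc_subset_Icc h1 h3)).pow 2
  -- per-step estimate
  have key : ∀ n : ℕ, 2 ≤ n → n ≤ N →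
      ‖Δt⁻¹ • ((φ' ((n:ℝ) * Δt) - Δt⁻¹ • (φ ((n:ℝ) * Δt) - φ (((n:ℝ) - 1) * Δt))) -
        (φ' (((n:ℝ) - 1) * Δt) - Δt⁻¹ • (φ (((n:ℝ) - 1) * Δt) - φ (((n:ℝ) - 2) * Δt))))‖ ^ 2
      ≤ Δt / 2 * (B (n - 2) + B (n - 1)) := by
    intro n h2n hnN
    have h2nR : (2:ℝ) ≤ (n:ℝ) := by exact_mod_cast h2n
    have hnNR : (n:ℝ) ≤ (N:ℝ) := by exact_mod_cast hnN
    have h0a : 0 ≤ ((n:ℝ) - 2) * Δt := mul_nonneg (by linarith) hΔt.le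
    have hbT : (n:ℝ) * Δt ≤ T := by rw [← hNΔt]; nlinarith
    have hps := per_step hΔt hd1 hd2 hd3 hc (a := ((n:ℝ) - 2) * Δt) (m := ((n:ℝ) - 1) * Δt)
      (b := (n:ℝ) * Δt) h0a (by ring) (by ring) hbT
    refine le_trans hps ?_
    have h0m : (0:ℝ) ≤ ((n:ℝ) - 1) * Δt := mul_nonneg (by linarith) hΔt.le
    have hmT : ((n:ℝ) - 1) * Δt ≤ T := by rw [← hNΔt]; nlinarith
    have i1 : IntervalIntegrable (fun t => ‖φ''' t‖ ^ 2) volume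
        (((n:ℝ) - 2) * Δt) (((n:ℝ) - 1) * Δt) := intsq h0a (by nlinarith) hmT
    have i2 : IntervalIntegrable (fun t => ‖φ''' t‖ ^ 2) volume
        (((n:ℝ) - 1) * Δt) ((n:ℝ) * Δt) := intsq h0m (by nlinarith) hbT
    have hadd := intervalIntegral.integral_add_adjacent_intervals i1 i2
    rw [← hadd]
    have c2 : ((n - 2 : ℕ) : ℝ) = (n:ℝ) - 2 := by
      rw [Nat.cast_sub h2n]; norm_num
    have c1 : ((n - 1 : ℕ) : ℝ) = (n:ℝ) - 1 := by
      rw [Nat.cast_sub (by omega)]; norm_num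
    have e1 : B (n - 2) = ∫ t in (((n:ℝ) - 2) * Δt)..(((n:ℝ) - 1) * Δt), ‖φ''' t‖ ^ 2 := by
      show (∫ t in (((n - 2 : ℕ):ℝ) * Δt)..((((n - 2 : ℕ):ℝ) + 1) * Δt), ‖φ''' t‖ ^ 2) = _
      rw [c2]; congr 1; ring
    have e2 : B (n - 1) = ∫ t in (((n:ℝ) - 1) * Δt)..((n:ℝ) * Δt), ‖φ''' t‖ ^ 2 := by
      show (∫ t in (((n - 1 : ℕ):ℝ) * Δt)..((((n - 1 : ℕ):ℝ) + 1) * Δt), ‖φ''' t‖ ^ 2) = _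
      rw [c1]; congr 1; ring
    rw [e1, e2]
  -- telescoping identity
  have hkT : (k:ℝ) * Δt ≤ T := by
    have : (k:ℝ) ≤ (N:ℝ) := by exact_mod_cast hkN
    rw [← hNΔt]; nlinarith
  have hS : ∑ i ∈ Finset.range k, B i = ∫ t in (0:ℝ)..((k:ℝ) * Δt), ‖φ''' t‖ ^ 2 := by
    have hint : ∀ i, i < k → IntervalIntegrable (fun t => ‖φ''' t‖ ^ 2) volume
        ((i:ℝ) * Δt) (((i + 1 : ℕ):ℝ) * Δt) := by
      intro i hik
      have h1 : (0:ℝ) ≤ (i:ℝ) * Δt := by positivity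
      have h2 : ((i + 1 : ℕ):ℝ) * Δt ≤ (k:ℝ) * Δt := by
        have : ((i + 1 : ℕ):ℝ) ≤ (k:ℝ) := by exact_mod_cast hik
        nlinarith
      have h3 : (i:ℝ) * Δt ≤ ((i + 1 : ℕ):ℝ) * Δt := by push_cast; nlinarith
      exact intsq h1 h3 (le_trans h2 hkT)
    have h := intervalIntegral.sum_integral_adjacent_intervals
      (a := fun i : ℕ => (i:ℝ) * Δt) (f := fun t => ‖φ''' t‖ ^ 2) hint
    simp only [Nat.cast_zero, zero_mul] at h
    rw [← h]
    apply Finset.sum_congr rfl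
    intro i _
    show (∫ t in ((i:ℝ) * Δt)..(((i:ℝ) + 1) * Δt), ‖φ''' t‖ ^ 2) = _
    congr 1
    push_cast; ring
  have hSnn : 0 ≤ ∑ i ∈ Finset.range k, B i := Finset.sum_nonneg fun i _ => hBnn i
  -- the sum estimate
  have hsum : ∑ n ∈ Finset.Icc 2 k,
      ‖Δt⁻¹ • ((φ' ((n:ℝ) * Δt) - Δt⁻¹ • (φ ((n:ℝ) * Δt) - φ (((n:ℝ) - 1) * Δt))) -
        (φ' (((n:ℝ) - 1) * Δt) - Δt⁻¹ • (φ (((n:ℝ) - 1) * Δt) - φ (((n:ℝ) - 2) * Δt))))‖ ^ 2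
      ≤ Δt * ∑ i ∈ Finset.range k, B i := by
    rw [← Finset.Ico_add_one_right_eq_Icc, Finset.sum_Ico_eq_sum_range]
    have hk1 : k + 1 - 2 = k - 1 := by omega
    rw [hk1]
    have step1 : ∀ j ∈ Finset.range (k - 1),
        ‖Δt⁻¹ • ((φ' (((2 + j : ℕ):ℝ) * Δt) -
            Δt⁻¹ • (φ (((2 + j : ℕ):ℝ) * Δt) - φ ((((2 + j : ℕ):ℝ) - 1) * Δt))) -
          (φ' ((((2 + j : ℕ):ℝ) - 1) * Δt) -
            Δt⁻¹ • (φ ((((2 + j : ℕ):ℝ) - 1) * Δt) - φ ((((2 + j : ℕ):ℝ) - 2) * Δt))))‖ ^ 2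
        ≤ Δt / 2 * (B j + B (j + 1)) := by
      intro j hj
      have hjk : j < k - 1 := Finset.mem_range.1 hj
      have h1 : 2 ≤ 2 + j := by omega
      have h2 : 2 + j ≤ N := by omega
      have := key (2 + j) h1 h2
      have e1 : 2 + j - 2 = j := by omega
      have e2 : 2 + j - 1 = j + 1 := by omega
      rwa [e1, e2] at this
    calc ∑ j ∈ Finset.range (k - 1),
          ‖Δt⁻¹ • ((φ' (((2 + j : ℕ):ℝ) * Δt) -
              Δt⁻¹ • (φ (((2 + j : ℕ):ℝ) * Δt) - φ ((((2 + j : ℕ):ℝ) - 1) * Δt))) -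
            (φ' ((((2 + j : ℕ):ℝ) - 1) * Δt) -
              Δt⁻¹ • (φ ((((2 + j : ℕ):ℝ) - 1) * Δt) - φ ((((2 + j : ℕ):ℝ) - 2) * Δt))))‖ ^ 2
        ≤ ∑ j ∈ Finset.range (k - 1), Δt / 2 * (B j + B (j + 1)) :=
          Finset.sum_le_sum step1
      _ = Δt / 2 * ((∑ j ∈ Finset.range (k - 1), B j) +
            ∑ j ∈ Finset.range (k - 1), B (j + 1)) := by
          rw [← Finset.sum_add_distrib, Finset.mul_sum]
      _ ≤ Δt / 2 * ((∑ i ∈ Finset.range k, B i) + ∑ i ∈ Finset.range k, B i) := by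
          apply mul_le_mul_of_nonneg_left _ (by positivity)
          apply add_le_add
          · exact Finset.sum_le_sum_of_subset_of_nonneg
              (Finset.range_subset_range.2 (by omega)) (fun i _ _ => hBnn i)
          · have hkk : k - 1 + 1 = k := by omega
            have := Finset.sum_range_succ' B (k - 1)
            rw [hkk] at this
            rw [this]
            have := hBnn 0
            linarith
      _ = Δt * ∑ i ∈ Finset.range k, B i := by ring
  rw [← hS]
  calc Δt * ∑ n ∈ Finset.Icc 2 k,
        ‖Δt⁻¹ • ((φ' ((n:ℝ) * Δt) - Δt⁻¹ • (φ ((n:ℝ) * Δt) - φ (((n:ℝ) - 1) * Δt))) -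
          (φ' (((n:ℝ) - 1) * Δt) - Δt⁻¹ • (φ (((n:ℝ) - 1) * Δt) - φ (((n:ℝ) - 2) * Δt))))‖ ^ 2
      ≤ Δt * (Δt * ∑ i ∈ Finset.range k, B i) :=
        mul_le_mul_of_nonneg_left hsum hΔt.le
    _ ≤ 2 * Δt ^ 2 * ∑ i ∈ Finset.range k, B i := by nlinarith
end
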